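/- In a symmetric FEN-hedonic game, if a player i strictly prefers joining a coalition C ∈ Γ ∪ {∅} (i.e., u_i(C ∪ {i}) > u_i(Γ(i))), then moving i from Γ(i) to C strictly increases the social welfare Σ_j u_j of the coalition structure. -/
import Mathlib


open Finset

noncomputable def util {N : Type*} [DecidableEq N] (f e : ℝ)
    (friends enemies : N → Finset N) (i : N) (C : Finset N) : ℝ :=
  f * ((C ∩ friends i).card : ℝ) - e * ((C ∩ enemies i).card : ℝ)

/-- In a symmetric FEN-hedonic game, a beneficial Nash deviation of a single player
strictly increases social welfare. -/
theorem nash_deviation_increases_social_welfare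
    {N : Type*} [Fintype N] [DecidableEq N]
    (f e : ℝ) (hf : 0 < f) (he : 0 < e)
    (friends enemies : N → Finset N)
    (hdisj : ∀ k, Disjoint (friends k) (enemies k))
    (hfir : ∀ k, k ∉ friends k) (heir : ∀ k, k ∉ enemies k)
    (hsymF : ∀ i j, j ∈ friends i ↔ i ∈ friends j)
    (hsymE : ∀ i j, j ∈ enemies i ↔ i ∈ enemies j)
    (Γ : N → Finset N) (hmem : ∀ i, i ∈ Γ i) (hpart : ∀ i j, j ∈ Γ i → Γ j = Γ i)
    (i : N) (C : Finset N) (hC : C = ∅ ∨ ∃ k, C = Γ k) (hiC : i ∉ C)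
    (hdev : util f e friends enemies i (insert i C) > util f e friends enemies i (Γ i)) :
    (∑ j : N, util f e friends enemies j
        (if j = i ∨ j ∈ C then insert i C else if j ∈ Γ i then (Γ i).erase i else Γ j))
      > ∑ j : N, util f e friends enemies j (Γ j) := by
  classical
  set u := util f e friends enemies with hu
  -- every member of C has coalition C
  have hCeq : ∀ j ∈ C, Γ j = C := by
    intro j hj
    rcases hC with h | ⟨k, rfl⟩
    · simp [h] at hj
    · exact hpart k j hj
  -- C and Γ i are disjoint
  have hdisjCG : ∀ j ∈ C, j ∉ Γ i := by
    intro j hj hjG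
    have h1 := hCeq j hj
    have h2 := hpart i j hjG
    exact hiC (h1 ▸ h2 ▸ hmem i)
  -- per-player gain function
  set g : N → ℝ := fun j =>
    f * (if i ∈ friends j then (1:ℝ) else 0) - e * (if i ∈ enemies j then (1:ℝ) else 0)
    with hg
  have card_insert : ∀ (S T : Finset N), i ∉ S →
      (((insert i S ∩ T).card : ℝ)) = ((S ∩ T).card : ℝ) + (if i ∈ T then (1:ℝ) else 0) := by
    intro S T hiS
    by_cases h : i ∈ T
    · rw [if_pos h, Finset.insert_inter_of_mem h,
        Finset.card_insert_of_notMem (fun hmem' => hiS (Finset.mem_of_mem_inter_left hmem'))]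
      push_cast; ring
    · rw [if_neg h, Finset.insert_inter_of_notMem h, add_zero]
  have u_insert : ∀ (j : N) (S : Finset N), i ∉ S → u j (insert i S) = u j S + g j := by
    intro j S hiS
    simp only [hu, util, hg, card_insert _ _ hiS]
    ring
  -- sum of indicator over symmetric relation
  have sum_ind : ∀ (S : Finset N) (T : N → Finset N), (∀ a b, b ∈ T a ↔ a ∈ T b) →
      ∑ j ∈ S, (if i ∈ T j then (1:ℝ) else 0) = ((S ∩ T i).card : ℝ) := by
    intro S T hsym
    rw [show (S ∩ T i) = S.filter (· ∈ T i) from (Finset.filter_mem_eq_inter).symm]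
    rw [← Finset.sum_boole]
    exact Finset.sum_congr rfl fun j _ => if_congr (hsym i j).symm rfl rfl
  have sum_g : ∀ S : Finset N, ∑ j ∈ S, g j = u i S := by
    intro S
    simp only [hg, hu, util]
    rw [Finset.sum_sub_distrib, ← Finset.mul_sum, ← Finset.mul_sum,
      sum_ind S friends hsymF, sum_ind S enemies hsymE]
  -- key: i ∉ friends i, enemies i so inserting i doesn't change u i
  have u_i_insert : u i (insert i C) = u i C := by
    simp only [hu, util, Finset.insert_inter_of_notMem (hfir i),
      Finset.insert_inter_of_notMem (heir i)]
  set Δ : ℝ := u i (insert i C) - u i (Γ i) with hΔ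
  have hΔpos : 0 < Δ := sub_pos.mpr hdev
  -- the deviation function
  set d : N → ℝ := fun j =>
    u j (if j = i ∨ j ∈ C then insert i C else if j ∈ Γ i then (Γ i).erase i else Γ j)
      - u j (Γ j) with hd
  rw [gt_iff_lt, ← sub_pos, ← Finset.sum_sub_distrib]
  have herase : Γ i = insert i ((Γ i).erase i) := (Finset.insert_erase (hmem i)).symm
  have hiE : i ∉ (Γ i).erase i := Finset.notMem_erase i _
  -- compute d on each region
  have dC : ∀ j ∈ C, d j = g j := by
    intro j hj
    have hji : j ≠ i := fun h => hiC (h ▸ hj)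
    simp only [hd, if_pos (Or.inr hj), hCeq j hj, u_insert j C hiC]
    ring
  have dE : ∀ j ∈ (Γ i).erase i, d j = -g j := by
    intro j hj
    have hji : j ≠ i := Finset.ne_of_mem_erase hj
    have hjG : j ∈ Γ i := Finset.mem_of_mem_erase hj
    have hjC : j ∉ C := fun h => hdisjCG j h hjG
    have : Γ j = Γ i := hpart i j hjG
    have h2 : u j (Γ i) = u j ((Γ i).erase i) + g j := by
      nth_rewrite 1 [herase]
      exact u_insert j _ hiE
    simp only [hd, hji, hjC, or_self, if_false, if_pos hjG, this, h2]
    ring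
  have di : d i = Δ := by simp [hd, hΔ]
  have d0 : ∀ j, j ∉ insert i (C ∪ (Γ i).erase i) → d j = 0 := by
    intro j hj
    simp only [Finset.mem_insert, Finset.mem_union, not_or] at hj
    obtain ⟨hji, hjC, hjE⟩ := hj
    have hjG : j ∉ Γ i := fun h => hjE (Finset.mem_erase.mpr ⟨hji, h⟩)
    simp [hd, hji, hjC, hjG]
  have hsum : ∑ j : N, d j = 2 * Δ := by
    rw [← Finset.sum_subset (Finset.subset_univ (insert i (C ∪ (Γ i).erase i)))
      (fun j _ hj => d0 j hj)]
    rw [Finset.sum_insert (by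
      simp only [Finset.mem_union, not_or]
      exact ⟨hiC, hiE⟩)]
    rw [Finset.sum_union (by
      rw [Finset.disjoint_left]
      intro j hj hj'
      exact hdisjCG j hj (Finset.mem_of_mem_erase hj'))]
    rw [Finset.sum_congr rfl dC, Finset.sum_congr rfl dE, di, sum_g,
      Finset.sum_neg_distrib, sum_g]
    have hErase : u i ((Γ i).erase i) = u i (Γ i) := by
      conv_rhs => rw [herase]
      rw [u_insert i _ hiE]
      have : g i = 0 := by simp [hg, hfir i, heir i]
      rw [this, add_zero]
    rw [hErase]
    simp only [hΔ, u_i_insert]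
    ring
  calc (0:ℝ) < 2 * Δ := by linarith
    _ = ∑ j : N, d j := hsum.symm
    _ = _ := rfl
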